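/- Let g : ℤ_p → ℤ_p be a 1-Lipschitz function and d ∈ ℤ_p with d ≢ 0 (mod p). Then the function f(x) = d + x + p·(g(x+1) − g(x)) is ergodic on ℤ_p. -/

import Mathlib

open MeasureTheory Finset

namespace VDP

noncomputable instance (p : ℕ) [Fact p.Prime] : MeasurableSpace ℤ_[p] := borel _
instance (p : ℕ) [Fact p.Prime] : BorelSpace ℤ_[p] := ⟨rfl⟩

/-- The Haar probability measure on `ℤ_[p]`. -/
noncomputable def haarZp (p : ℕ) [Fact p.Prime] : Measure ℤ_[p] :=
  Measure.addHaarMeasure ⊤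

/-- `f` is 1-Lipschitz. -/
def IsLip (p : ℕ) [Fact p.Prime] (f : ℤ_[p] → ℤ_[p]) : Prop :=
  ∀ x y : ℤ_[p], ‖f x - f y‖ ≤ ‖x - y‖

/-- The van der Put basis function `χ(m, x)` on `ℤ_[p]` (with `⌊log_p 0⌋ = 0`). -/
noncomputable def chi (p : ℕ) [Fact p.Prime] (m : ℕ) (x : ℤ_[p]) : ℤ_[p] :=
  if ‖x - (m : ℤ_[p])‖ ≤ ((p : ℝ) ^ (Nat.log p m + 1))⁻¹ then 1 else 0

/-- `q(m) = m_s p^s`, the leading term of the `p`-adic expansion of `m`. -/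
def q (p m : ℕ) : ℕ := m / p ^ Nat.log p m * p ^ Nat.log p m

/-- `f` has van der Put expansion with coefficients `B`. -/
def vdpExpansion (p : ℕ) [Fact p.Prime] (f : ℤ_[p] → ℤ_[p]) (B : ℕ → ℤ_[p]) : Prop :=
  ∀ x, f x = ∑' m, B m * chi p m x

/-- `f` is bijective modulo `p^n`. -/
def BijModPow (p : ℕ) [Fact p.Prime] (f : ℤ_[p] → ℤ_[p]) (n : ℕ) : Prop :=
  Function.Bijective fun a : ZMod (p ^ n) => PadicInt.toZModPow n (f ((a.val : ℕ) : ℤ_[p]))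

/-- `f` is transitive modulo `p^n`. -/
def TransModPow (p : ℕ) [Fact p.Prime] (f : ℤ_[p] → ℤ_[p]) (n : ℕ) : Prop :=
  ∀ x : ℤ_[p], ∀ a : ZMod (p ^ n), ∃ k : ℕ, PadicInt.toZModPow n (f^[k] x) = a

/-- The `i`-th digit of the canonical `p`-adic expansion of `x`. -/
noncomputable def digit (p : ℕ) [Fact p.Prime] (x : ℤ_[p]) (i : ℕ) : ℕ :=
  x.appr (i + 1) / p ^ i % p

end VDP

namespace VDPAux
open VDP

variable {p : ℕ} [Fact p.Prime]

theorem dvd_iff_norm_le {n : ℕ} {x : ℤ_[p]} :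
    (p:ℤ_[p])^n ∣ x ↔ ‖x‖ ≤ (p:ℝ)^(-(n:ℤ)) := by
  rw [PadicInt.norm_le_pow_iff_mem_span_pow, Ideal.mem_span_singleton]

theorem tzm_eq_iff_dvd {n : ℕ} {x y : ℤ_[p]} :
    PadicInt.toZModPow n x = PadicInt.toZModPow n y ↔ (p:ℤ_[p])^n ∣ (x - y) := by
  rw [← sub_eq_zero, ← map_sub, ← RingHom.mem_ker, PadicInt.ker_toZModPow,
    Ideal.mem_span_singleton]

theorem lip_dvd {g : ℤ_[p] → ℤ_[p]} (hg : IsLip p g) {n : ℕ} {x y : ℤ_[p]}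
    (h : (p:ℤ_[p])^n ∣ x - y) : (p:ℤ_[p])^n ∣ g x - g y :=
  dvd_iff_norm_le.2 ((hg x y).trans (dvd_iff_norm_le.1 h))

theorem norm_sub_le_max (x y : ℤ_[p]) : ‖x - y‖ ≤ max ‖x‖ ‖y‖ := by
  simpa [sub_eq_add_neg] using PadicInt.nonarchimedean x (-y)

theorem norm_add_of_lt {a b : ℤ_[p]} (h : ‖b‖ < ‖a‖) : ‖a + b‖ = ‖a‖ := by
  refine le_antisymm ((PadicInt.nonarchimedean a b).trans (max_le le_rfl h.le)) ?_
  have h2 : ‖a‖ ≤ max ‖a + b‖ ‖b‖ := by simpa using norm_sub_le_max (a+b) b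
  rcases max_cases ‖a + b‖ ‖b‖ with ⟨he, _⟩ | ⟨he, _⟩
  · rwa [he] at h2
  · exact absurd (h2.trans he.le) (not_le.2 h)


section Core
variable (g : ℤ_[p] → ℤ_[p]) (d : ℤ_[p])

/-- The map under study. -/
noncomputable def F (x : ℤ_[p]) : ℤ_[p] := d + x + (p : ℤ_[p]) * (g (x + 1) - g x)

variable {g d}

theorem F_isometry (hg : IsLip p g) (x y : ℤ_[p]) : ‖F g d x - F g d y‖ = ‖x - y‖ := by
  have hkey : F g d x - F g d y = (x - y) + (p:ℤ_[p]) * ((g (x+1) - g (y+1)) - (g x - g y)) := by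
    unfold F; ring
  rcases eq_or_ne x y with rfl | hne
  · simp [hkey]
  · rw [hkey]
    apply norm_add_of_lt
    have h1 : ‖(g (x+1) - g (y+1)) - (g x - g y)‖ ≤ ‖x - y‖ := by
      refine (norm_sub_le_max _ _).trans (max_le ?_ (hg x y))
      simpa using hg (x+1) (y+1)
    have hp1 : ‖(p : ℤ_[p])‖ < 1 := by
      rw [PadicInt.norm_p]
      exact inv_lt_one_of_one_lt₀ (by exact_mod_cast (Fact.out (p := p.Prime)).one_lt)
    calc ‖(p:ℤ_[p]) * ((g (x+1) - g (y+1)) - (g x - g y))‖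
        ≤ ‖(p:ℤ_[p])‖ * ‖x - y‖ := by
          rw [norm_mul]; exact mul_le_mul_of_nonneg_left h1 (norm_nonneg _)
      _ < 1 * ‖x - y‖ := by
          apply mul_lt_mul_of_pos_right hp1
          simpa [sub_eq_zero] using hne
      _ = ‖x - y‖ := one_mul _

theorem F_dvd_iff (hg : IsLip p g) {n : ℕ} {x y : ℤ_[p]} :
    (p:ℤ_[p])^n ∣ F g d x - F g d y ↔ (p:ℤ_[p])^n ∣ x - y := by
  rw [dvd_iff_norm_le, dvd_iff_norm_le, F_isometry hg]

theorem F_iter (k : ℕ) (x : ℤ_[p]) :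
    (F g d)^[k] x = x + k * d +
      (p:ℤ_[p]) * ∑ j ∈ Finset.range k, (g ((F g d)^[j] x + 1) - g ((F g d)^[j] x)) := by
  induction k with
  | zero => simp
  | succ k ih =>
    rw [Function.iterate_succ_apply']
    have hF : ∀ y, F g d y = d + y + (p:ℤ_[p]) * (g (y+1) - g y) := fun _ => rfl
    rw [hF, Finset.sum_range_succ, ih]
    push_cast
    ring

theorem telescope (N : ℕ) :
    ∑ m ∈ Finset.range N, (g ((m:ℤ_[p]) + 1) - g (m:ℤ_[p])) = g (N:ℤ_[p]) - g 0 := by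
  induction N with
  | zero => simp
  | succ N ih =>
    rw [Finset.sum_range_succ, ih]
    have : ((N:ℤ_[p]) + 1) = ((N+1 : ℕ) : ℤ_[p]) := by push_cast; ring
    rw [this]; ring

/-- The inductive transitivity statement. -/
def Qprop (g : ℤ_[p] → ℤ_[p]) (d : ℤ_[p]) (n : ℕ) : Prop :=
  ∀ x : ℤ_[p], ∀ k : ℕ, ((p:ℤ_[p])^n ∣ (F g d)^[k] x - x ↔ p^n ∣ k)

theorem rho_bijective (hg : IsLip p g) {n : ℕ} (hQ : Qprop g d n) (x : ℤ_[p]) :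
    Function.Bijective (fun j : Fin (p^n) =>
      PadicInt.toZModPow n ((F g d)^[(j:ℕ)] x) : Fin (p^n) → ZMod (p^n)) := by
  haveI : NeZero (p^n) := ⟨pow_ne_zero n (Fact.out (p := p.Prime)).ne_zero⟩
  rw [Fintype.bijective_iff_injective_and_card]
  refine ⟨?_, by simp⟩
  suffices H : ∀ i j : Fin (p^n), (i:ℕ) ≤ (j:ℕ) →
      PadicInt.toZModPow n ((F g d)^[(i:ℕ)] x) = PadicInt.toZModPow n ((F g d)^[(j:ℕ)] x) →
      i = j by
    intro i j hij
    rcases le_total (i:ℕ) (j:ℕ) with hle | hle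
    · exact H i j hle hij
    · exact (H j i hle hij.symm).symm
  intro i j hle hij
  have h1 : (p:ℤ_[p])^n ∣ (F g d)^[(j:ℕ)] x - (F g d)^[(i:ℕ)] x := by
    rw [← tzm_eq_iff_dvd]; exact hij.symm
  have h2 : (F g d)^[(j:ℕ)] x = (F g d)^[(j:ℕ) - (i:ℕ)] ((F g d)^[(i:ℕ)] x) := by
    rw [← Function.iterate_add_apply, Nat.sub_add_cancel hle]
  rw [h2] at h1
  have h3 : p^n ∣ (j:ℕ) - (i:ℕ) := (hQ _ _).1 h1
  have h4 : (j:ℕ) - (i:ℕ) = 0 :=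
    Nat.eq_zero_of_dvd_of_lt h3 (lt_of_le_of_lt (Nat.sub_le _ _) j.isLt)
  exact Fin.ext (Nat.le_antisymm hle (Nat.sub_eq_zero_iff_le.mp h4))

theorem step_key (hg : IsLip p g) {n : ℕ} (hQ : Qprop g d n) (x : ℤ_[p]) :
    (p:ℤ_[p])^(n+1) ∣ (F g d)^[p^n] x - (x + (p:ℤ_[p])^n * d) := by
  haveI : NeZero (p^n) := ⟨pow_ne_zero n (Fact.out (p := p.Prime)).ne_zero⟩
  set S : ℤ_[p] := ∑ j ∈ Finset.range (p^n), (g ((F g d)^[j] x + 1) - g ((F g d)^[j] x)) with hS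
  have heq : (F g d)^[p^n] x - (x + (p:ℤ_[p])^n * d) = (p:ℤ_[p]) * S := by
    rw [F_iter]; push_cast; ring
  suffices hdvd : (p:ℤ_[p])^n ∣ S by
    rcases hdvd with ⟨c, hc⟩
    exact ⟨c, by rw [heq, hc]; ring⟩
  set c : ℕ → ℤ_[p] :=
    fun j => (((PadicInt.toZModPow n ((F g d)^[j] x)).val : ℕ) : ℤ_[p]) with hc
  have h5 : ∀ j, (p:ℤ_[p])^n ∣ (F g d)^[j] x - c j := by
    intro j
    rw [← tzm_eq_iff_dvd, hc]
    simp only [map_natCast]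
    exact (ZMod.natCast_rightInverse _).symm
  set T : ℤ_[p] := ∑ j ∈ Finset.range (p^n), (g (c j + 1) - g (c j)) with hT
  have hST : (p:ℤ_[p])^n ∣ S - T := by
    rw [hS, hT, ← Finset.sum_sub_distrib]
    apply Finset.dvd_sum
    intro j _
    have d1 : (p:ℤ_[p])^n ∣ g ((F g d)^[j] x + 1) - g (c j + 1) :=
      lip_dvd hg (by simpa using h5 j)
    have d2 := lip_dvd hg (h5 j)
    convert dvd_sub d1 d2 using 1; ring
  have hTval : T = ∑ m ∈ Finset.range (p^n), (g ((m:ℤ_[p]) + 1) - g (m:ℤ_[p])) := by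
    rw [hT, Finset.sum_range fun j => (g (c j + 1) - g (c j))]
    rw [Fintype.sum_bijective _ (rho_bijective hg hQ x)
      (fun j : Fin (p^n) => (g (c (j:ℕ) + 1) - g (c (j:ℕ))))
      (fun a : ZMod (p^n) => (g (((a.val : ℕ):ℤ_[p]) + 1) - g ((a.val : ℕ):ℤ_[p])))
      (fun j => rfl)]
    refine Finset.sum_bij' (fun a _ => a.val) (fun m _ => (m : ZMod (p^n))) ?_ ?_ ?_ ?_ ?_
    · intro a _; exact Finset.mem_range.2 (ZMod.val_lt a)
    · intro m _; exact Finset.mem_univ _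
    · intro a _; exact ZMod.natCast_rightInverse a
    · intro m hm; exact ZMod.val_cast_of_lt (Finset.mem_range.1 hm)
    · intro a _; rfl
  have hfin : (p:ℤ_[p])^n ∣ g (((p^n : ℕ)):ℤ_[p]) - g ((0:ℕ):ℤ_[p]) := by
    apply lip_dvd hg
    push_cast
    simp
  have : S = (S - T) + (g (((p^n : ℕ)):ℤ_[p]) - g ((0:ℕ):ℤ_[p])) := by
    rw [hTval]
    rw [telescope (p^n)]
    push_cast
    ring
  rw [this]
  exact dvd_add hST hfin

theorem step_mul (hg : IsLip p g) {n : ℕ} (hQ : Qprop g d n) (x : ℤ_[p]) (m : ℕ) :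
    (p:ℤ_[p])^(n+1) ∣ (F g d)^[m * p^n] x - (x + (m : ℤ_[p]) * (p:ℤ_[p])^n * d) := by
  induction m with
  | zero => simp
  | succ m ih =>
    have h1 : (F g d)^[(m+1) * p^n] x = (F g d)^[p^n] ((F g d)^[m * p^n] x) := by
      rw [← Function.iterate_add_apply, add_comm (p^n), ← add_one_mul]
    have h2 := step_key hg hQ ((F g d)^[m * p^n] x)
    have h3 : (F g d)^[(m+1) * p^n] x - (x + ((m:ℤ_[p]) + 1) * (p:ℤ_[p])^n * d) =
        ((F g d)^[p^n] ((F g d)^[m * p^n] x) -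
          ((F g d)^[m * p^n] x + (p:ℤ_[p])^n * d)) +
        ((F g d)^[m * p^n] x - (x + (m : ℤ_[p]) * (p:ℤ_[p])^n * d)) := by
      rw [h1]; ring
    push_cast
    rw [h3]
    exact dvd_add h2 ih

theorem nat_dvd_of_padic_dvd {s : ℕ} (h : (p:ℤ_[p]) ∣ (s : ℤ_[p])) : p ∣ s := by
  have h2 : ‖((s:ℤ) : ℤ_[p])‖ < 1 := by
    rcases h with ⟨c, hc⟩
    push_cast
    rw [hc, norm_mul, PadicInt.norm_p]
    calc (p:ℝ)⁻¹ * ‖c‖ ≤ (p:ℝ)⁻¹ * 1 := by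
          exact mul_le_mul_of_nonneg_left (PadicInt.norm_le_one c) (by positivity)
      _ < 1 := by
          rw [mul_one]
          exact inv_lt_one_of_one_lt₀ (by exact_mod_cast (Fact.out (p := p.Prime)).one_lt)
  rw [PadicInt.norm_int_lt_one_iff_dvd] at h2
  exact_mod_cast h2

theorem Qstep (hg : IsLip p g) (hd : ¬ (p : ℤ_[p]) ∣ d) {n : ℕ} (hQ : Qprop g d n) :
    Qprop g d (n+1) := by
  intro x k
  constructor
  · intro h
    have hn : p^n ∣ k := by
      refine (hQ x k).1 (dvd_trans ?_ h)
      exact pow_dvd_pow _ (Nat.le_succ n)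
    rcases hn with ⟨s, hs⟩
    have h2 := step_mul hg hQ x s
    rw [mul_comm s (p^n), ← hs] at h2
    have h3 : (p:ℤ_[p])^(n+1) ∣ (s : ℤ_[p]) * (p:ℤ_[p])^n * d := by
      have : (s : ℤ_[p]) * (p:ℤ_[p])^n * d =
          ((F g d)^[k] x - x) - ((F g d)^[k] x - (x + (s : ℤ_[p]) * (p:ℤ_[p])^n * d)) := by
        ring
      rw [this]
      exact dvd_sub h h2
    have h4 : (p:ℤ_[p]) ∣ (s : ℤ_[p]) * d := by
      have hpn : ((p:ℤ_[p])^n) ≠ 0 := pow_ne_zero _ (PadicInt.prime_p (p := p)).ne_zero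
      rw [pow_succ] at h3
      rcases h3 with ⟨c, hc⟩
      refine ⟨c, mul_left_cancel₀ hpn ?_⟩
      calc (p:ℤ_[p])^n * ((s:ℤ_[p]) * d) = (s : ℤ_[p]) * (p:ℤ_[p])^n * d := by ring
        _ = (p:ℤ_[p])^n * (p:ℤ_[p]) * c := hc
        _ = (p:ℤ_[p])^n * ((p:ℤ_[p]) * c) := by ring
    have h5 : (p:ℤ_[p]) ∣ (s : ℤ_[p]) := by
      rcases (PadicInt.prime_p (p := p)).2.2 _ _ h4 with h' | h'
      · exact h'
      · exact absurd h' hd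
    have h6 : p ∣ s := nat_dvd_of_padic_dvd h5
    rw [hs, pow_succ]
    exact Nat.mul_dvd_mul (dvd_refl _) h6
  · intro h
    rcases h with ⟨m, hm⟩
    have h1 : k = (m * p) * p^n := by rw [hm]; ring
    have h2 := step_mul hg hQ x (m * p)
    rw [← h1] at h2
    have h3 : (p:ℤ_[p])^(n+1) ∣ ((m * p : ℕ) : ℤ_[p]) * (p:ℤ_[p])^n * d := by
      refine ⟨(m:ℤ_[p]) * d, ?_⟩
      push_cast
      rw [pow_succ]
      ring
    have : (F g d)^[k] x - x =
        ((F g d)^[k] x - (x + ((m * p : ℕ) : ℤ_[p]) * (p:ℤ_[p])^n * d)) +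
        ((m * p : ℕ) : ℤ_[p]) * (p:ℤ_[p])^n * d := by ring
    rw [this]
    exact dvd_add h2 h3

theorem Qall (hg : IsLip p g) (hd : ¬ (p : ℤ_[p]) ∣ d) (n : ℕ) : Qprop g d n := by
  induction n with
  | zero => intro x k; simp
  | succ n ih => exact Qstep hg hd ih

theorem trans_mod (hg : IsLip p g) (hd : ¬ (p : ℤ_[p]) ∣ d) (n : ℕ) (x : ℤ_[p])
    (a : ZMod (p^n)) : ∃ k : ℕ, PadicInt.toZModPow n ((F g d)^[k] x) = a := by
  rcases (rho_bijective hg (Qall hg hd n) x).2 a with ⟨j, hj⟩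
  exact ⟨(j:ℕ), hj⟩

end Core

section MeasurePart

open VDP MeasureTheory
open scoped ENNReal NNReal

/-- The clopen ball of level `n` around residue `a`. -/
def ball (n : ℕ) (a : ZMod (p^n)) : Set ℤ_[p] := PadicInt.toZModPow n ⁻¹' {a}

theorem tzm_lift {n : ℕ} (a : ZMod (p^n)) :
    PadicInt.toZModPow n (((a.val : ℕ) : ℤ_[p])) = a := by
  haveI : NeZero (p^n) := ⟨pow_ne_zero n (Fact.out (p := p.Prime)).ne_zero⟩
  rw [map_natCast]
  exact ZMod.natCast_rightInverse a

theorem mem_ball_iff {n : ℕ} {a : ZMod (p^n)} {x : ℤ_[p]} :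
    x ∈ ball n a ↔ PadicInt.toZModPow n x = a := Iff.rfl

theorem ball_eq_closedBall (n : ℕ) (a : ZMod (p^n)) :
    ball n a = Metric.closedBall (((a.val : ℕ) : ℤ_[p])) ((p:ℝ)^(-(n:ℤ))) := by
  ext x
  rw [mem_ball_iff, Metric.mem_closedBall, dist_eq_norm, ← dvd_iff_norm_le,
    ← tzm_eq_iff_dvd, tzm_lift]

theorem measurableSet_ball {n : ℕ} {a : ZMod (p^n)} : MeasurableSet (ball n a) := by
  rw [ball_eq_closedBall]
  exact Metric.isClosed_closedBall.measurableSet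

theorem ball_norm {n : ℕ} {a : ZMod (p^n)} {x y : ℤ_[p]} (hx : x ∈ ball n a)
    (hy : y ∈ ball n a) : ‖y - x‖ ≤ (p:ℝ)^(-(n:ℤ)) := by
  rw [← dvd_iff_norm_le, ← tzm_eq_iff_dvd]
  rw [mem_ball_iff] at hx hy
  rw [hx, hy]

/-- The generating family of balls. -/
def ballFamily : Set (Set ℤ_[p]) := {s | ∃ n : ℕ, ∃ a : ZMod (p^n), s = ball n a}

theorem ball_subset_of_le {n m : ℕ} (h : n ≤ m) {a : ZMod (p^n)} {b : ZMod (p^m)}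
    {x : ℤ_[p]} (hxa : x ∈ ball n a) (hxb : x ∈ ball m b) : ball m b ⊆ ball n a := by
  intro y hy
  rw [mem_ball_iff] at hxa hxb hy ⊢
  rw [← hxa, tzm_eq_iff_dvd]
  refine dvd_trans (pow_dvd_pow _ h) ?_
  rw [← tzm_eq_iff_dvd, hy, hxb]

theorem isPiSystem_ballFamily : IsPiSystem (ballFamily (p := p)) := by
  rintro s ⟨n, a, rfl⟩ t ⟨m, b, rfl⟩ hne
  rcases hne with ⟨x, hxa, hxb⟩
  rcases le_total n m with h | h
  · rw [Set.inter_eq_self_of_subset_right (ball_subset_of_le h hxa hxb)]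
    exact ⟨m, b, rfl⟩
  · rw [Set.inter_eq_self_of_subset_left (ball_subset_of_le h hxb hxa)]
    exact ⟨n, a, rfl⟩

theorem generateFrom_ballFamily :
    (inferInstance : MeasurableSpace ℤ_[p]) =
      MeasurableSpace.generateFrom (ballFamily (p := p)) := by
  apply le_antisymm
  · show (borel ℤ_[p]) ≤ _
    refine MeasurableSpace.generateFrom_le fun U hU => ?_
    have hUeq : U = ⋃ n : ℕ, ⋃ a : ZMod (p^n), ⋃ (_ : ball n a ⊆ U), ball n a := by
      ext x
      simp only [Set.mem_iUnion]
      constructor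
      · intro hx
        rcases Metric.isOpen_iff.1 (show IsOpen U from hU) x hx with ⟨ε, hε, hball⟩
        obtain ⟨n, hn⟩ : ∃ n : ℕ, (p:ℝ)^(-(n:ℤ)) < ε := by
          have hp1 : (p:ℝ)⁻¹ < 1 :=
            inv_lt_one_of_one_lt₀ (by exact_mod_cast (Fact.out (p := p.Prime)).one_lt)
          rcases exists_pow_lt_of_lt_one hε hp1 with ⟨n, hn⟩
          refine ⟨n, ?_⟩
          rwa [zpow_neg, zpow_natCast, ← inv_pow]
        refine ⟨n, PadicInt.toZModPow n x, fun y hy => ?_, rfl⟩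
        apply hball
        rw [Metric.mem_ball, dist_eq_norm]
        exact lt_of_le_of_lt (ball_norm (mem_ball_iff.2 rfl) hy) hn
      · rintro ⟨n, a, hsub, hx⟩
        exact hsub hx
    rw [hUeq]
    refine MeasurableSet.iUnion fun n => ?_
    haveI : NeZero (p^n) := ⟨pow_ne_zero n (Fact.out (p := p.Prime)).ne_zero⟩
    refine MeasurableSet.iUnion fun a => MeasurableSet.iUnion fun _ => ?_
    exact MeasurableSpace.measurableSet_generateFrom ⟨n, a, rfl⟩
  · refine MeasurableSpace.generateFrom_le ?_
    rintro s ⟨n, a, rfl⟩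
    exact measurableSet_ball

theorem haar_univ : haarZp p Set.univ = 1 := by
  have : ((⊤ : TopologicalSpace.PositiveCompacts ℤ_[p]) : Set ℤ_[p]) = Set.univ := rfl
  rw [haarZp, ← this]
  exact Measure.addHaarMeasure_self

instance : IsProbabilityMeasure (haarZp p) := ⟨haar_univ⟩

instance : (haarZp p).IsAddLeftInvariant :=
  Measure.isAddLeftInvariant_addHaarMeasure ⊤

theorem measure_ball (n : ℕ) (a : ZMod (p^n)) :
    haarZp p (ball n a) = (((p^n : ℕ) : ℝ≥0∞))⁻¹ := by
  haveI : NeZero (p^n) := ⟨pow_ne_zero n (Fact.out (p := p.Prime)).ne_zero⟩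
  have hshift : ∀ b : ZMod (p^n), haarZp p (ball n b) = haarZp p (ball n 0) := by
    intro b
    have hpre : (fun x : ℤ_[p] => ((b.val : ℕ) : ℤ_[p]) + x) ⁻¹' (ball n b) = ball n 0 := by
      ext x
      rw [Set.mem_preimage, mem_ball_iff, mem_ball_iff, map_add, tzm_lift]
      constructor
      · intro h; have := congrArg (fun t => t - b) h; simpa using this
      · intro h; rw [h]; ring
    rw [← hpre, measure_preimage_add]
  have hcover : (⋃ b : ZMod (p^n), ball n b) = Set.univ := by
    ext x; simp only [Set.mem_iUnion, Set.mem_univ, iff_true]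
    exact ⟨PadicInt.toZModPow n x, rfl⟩
  have hdisj : Pairwise (Function.onFun Disjoint (fun b : ZMod (p^n) => ball n b)) := by
    intro b c hbc
    rw [Function.onFun, Set.disjoint_left]
    intro x hb hc
    rw [mem_ball_iff] at hb hc
    exact hbc (hb.symm.trans hc)
  have hsum := measure_iUnion (μ := haarZp p) hdisj (fun b => measurableSet_ball)
  rw [hcover, haar_univ, tsum_fintype] at hsum
  have hconst : ∀ b ∈ Finset.univ, haarZp p (ball n b) = haarZp p (ball n 0) :=
    fun b _ => hshift b
  rw [Finset.sum_congr rfl hconst, Finset.sum_const, Finset.card_univ, ZMod.card,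
    nsmul_eq_mul] at hsum
  have h0 : ((p^n : ℕ) : ℝ≥0∞) ≠ 0 := by
    exact_mod_cast (pow_pos (Fact.out (p := p.Prime)).pos n).ne'
  have htop : ((p^n : ℕ) : ℝ≥0∞) ≠ ⊤ := ENNReal.natCast_ne_top _
  have : ((p^n : ℕ) : ℝ≥0∞)⁻¹ * (((p^n : ℕ) : ℝ≥0∞) * haarZp p (ball n 0)) =
      ((p^n : ℕ) : ℝ≥0∞)⁻¹ := by rw [← hsum, mul_one]
  rw [← mul_assoc, ENNReal.inv_mul_cancel h0 htop, one_mul] at this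
  rw [hshift a, this]

end MeasurePart

section Final

open scoped ENNReal NNReal

variable {g : ℤ_[p] → ℤ_[p]} {d : ℤ_[p]}

/-- The induced permutation on residues mod `p^n`. -/
noncomputable def sigma (g : ℤ_[p] → ℤ_[p]) (d : ℤ_[p]) (n : ℕ) :
    ZMod (p^n) → ZMod (p^n) :=
  fun a => PadicInt.toZModPow n (F g d ((a.val : ℕ) : ℤ_[p]))

theorem sigma_spec (hg : IsLip p g) (n : ℕ) (x : ℤ_[p]) :
    PadicInt.toZModPow n (F g d x) = sigma g d n (PadicInt.toZModPow n x) := by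
  rw [sigma, tzm_eq_iff_dvd, F_dvd_iff hg, ← tzm_eq_iff_dvd, tzm_lift]

theorem sigma_bijective (hg : IsLip p g) (n : ℕ) : Function.Bijective (sigma g d n) := by
  haveI : NeZero (p^n) := ⟨pow_ne_zero n (Fact.out (p := p.Prime)).ne_zero⟩
  rw [Fintype.bijective_iff_injective_and_card]
  refine ⟨fun a b hab => ?_, rfl⟩
  rw [sigma, sigma, tzm_eq_iff_dvd, F_dvd_iff hg, ← tzm_eq_iff_dvd, tzm_lift, tzm_lift] at hab
  exact hab

theorem sigma_iter (hg : IsLip p g) (n : ℕ) (x : ℤ_[p]) (k : ℕ) :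
    PadicInt.toZModPow n ((F g d)^[k] x) = (sigma g d n)^[k] (PadicInt.toZModPow n x) := by
  induction k with
  | zero => rfl
  | succ k ih =>
    rw [Function.iterate_succ_apply', Function.iterate_succ_apply', sigma_spec hg, ih]

theorem sigma_trans (hg : IsLip p g) (hd : ¬ (p : ℤ_[p]) ∣ d) (n : ℕ)
    (a b : ZMod (p^n)) : ∃ k : ℕ, (sigma g d n)^[k] a = b := by
  rcases trans_mod hg hd n ((a.val : ℕ) : ℤ_[p]) b with ⟨k, hk⟩
  exact ⟨k, by rw [← hk, sigma_iter hg, tzm_lift]⟩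

theorem F_preimage_ball (hg : IsLip p g) (n : ℕ) (a : ZMod (p^n)) :
    F g d ⁻¹' ball n a = ball n ((Equiv.ofBijective _ (sigma_bijective (d := d) hg n)).symm a) := by
  ext x
  rw [Set.mem_preimage, mem_ball_iff, mem_ball_iff, sigma_spec hg]
  constructor
  · intro h
    have := congrArg (Equiv.ofBijective _ (sigma_bijective (d := d) hg n)).symm h
    simpa using this
  · intro h
    rw [h]
    exact (Equiv.ofBijective _ (sigma_bijective (d := d) hg n)).apply_symm_apply a

theorem F_continuous (hg : IsLip p g) : Continuous (F g d) := by
  have hgc : Continuous g := by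
    refine LipschitzWith.continuous (K := 1) ?_
    refine LipschitzWith.of_dist_le_mul fun x y => ?_
    simp only [NNReal.coe_one, one_mul, dist_eq_norm]
    exact hg x y
  exact (continuous_const.add continuous_id).add (continuous_const.mul
    ((hgc.comp (continuous_id.add continuous_const)).sub hgc))

theorem F_measurePreserving (hg : IsLip p g) :
    MeasurePreserving (F g d) (haarZp p) (haarZp p) := by
  have hmeas : Measurable (F g d) := (F_continuous hg).measurable
  refine ⟨hmeas, ?_⟩
  haveI : IsProbabilityMeasure ((haarZp p).map (F g d)) :=
    Measure.isProbabilityMeasure_map hmeas.aemeasurable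
  refine ext_of_generate_finite _ generateFrom_ballFamily isPiSystem_ballFamily ?_ ?_
  · rintro s ⟨n, a, rfl⟩
    rw [Measure.map_apply hmeas measurableSet_ball, F_preimage_ball hg,
      measure_ball, measure_ball]
  · rw [haar_univ]
    exact measure_univ

theorem F_ergodic (hg : IsLip p g) (hd : ¬ (p : ℤ_[p]) ∣ d) :
    Ergodic (F g d) (haarZp p) := by
  refine ⟨F_measurePreserving hg, ⟨fun s hs hfs => ?_⟩⟩
  rw [Filter.eventuallyConst_set']
  set μ := haarZp p with hμ
  set m := μ s with hm
  have hconst : ∀ n : ℕ, ∀ a b : ZMod (p^n), μ (s ∩ ball n a) = μ (s ∩ ball n b) := by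
    intro n a b
    have hstep : ∀ c : ZMod (p^n), μ (s ∩ ball n c) = μ (s ∩ ball n (sigma g d n c)) := by
      intro c
      have hpre : F g d ⁻¹' (s ∩ ball n (sigma g d n c)) = s ∩ ball n c := by
        have hsc : (Equiv.ofBijective _ (sigma_bijective (d := d) hg n)).symm (sigma g d n c)
            = c := (Equiv.ofBijective _ (sigma_bijective (d := d) hg n)).symm_apply_apply c
        rw [Set.preimage_inter, hfs, F_preimage_ball hg, hsc]
      have := (F_measurePreserving hg (d := d)).measure_preimage
        (s := s ∩ ball n (sigma g d n c)) ((hs.inter measurableSet_ball).nullMeasurableSet)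
      rw [hpre] at this
      rw [hμ]
      exact this
    have hiter : ∀ k : ℕ, ∀ c : ZMod (p^n),
        μ (s ∩ ball n c) = μ (s ∩ ball n ((sigma g d n)^[k] c)) := by
      intro k
      induction k with
      | zero => intro c; rfl
      | succ k ih =>
        intro c
        rw [Function.iterate_succ_apply', ← hstep ((sigma g d n)^[k] c), ih c]
    rcases sigma_trans hg hd n a b with ⟨k, hk⟩
    rw [hiter k a, hk]
  have hval : ∀ n : ℕ, ∀ a : ZMod (p^n),
      μ (s ∩ ball n a) = m * (((p^n : ℕ) : ℝ≥0∞))⁻¹ := by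
    intro n a
    haveI : NeZero (p^n) := ⟨pow_ne_zero n (Fact.out (p := p.Prime)).ne_zero⟩
    have hcover : (⋃ b : ZMod (p^n), (s ∩ ball n b)) = s := by
      rw [← Set.inter_iUnion]
      have : (⋃ b : ZMod (p^n), ball n b) = Set.univ := by
        ext x; simp only [Set.mem_iUnion, Set.mem_univ, iff_true]
        exact ⟨PadicInt.toZModPow n x, rfl⟩
      rw [this, Set.inter_univ]
    have hdisj : Pairwise (Function.onFun Disjoint (fun b : ZMod (p^n) => s ∩ ball n b)) := by
      intro b c hbc
      rw [Function.onFun, Set.disjoint_left]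
      rintro x ⟨_, hb⟩ ⟨_, hc⟩
      rw [mem_ball_iff] at hb hc
      exact hbc (hb.symm.trans hc)
    have hsum := measure_iUnion (μ := μ) hdisj
      (fun b => hs.inter measurableSet_ball)
    rw [hcover, tsum_fintype] at hsum
    have hconst' : ∀ b ∈ Finset.univ, μ (s ∩ ball n b) = μ (s ∩ ball n a) :=
      fun b _ => hconst n b a
    rw [Finset.sum_congr rfl hconst', Finset.sum_const, Finset.card_univ, ZMod.card,
      nsmul_eq_mul] at hsum
    have h0 : ((p^n : ℕ) : ℝ≥0∞) ≠ 0 := by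
      exact_mod_cast (pow_pos (Fact.out (p := p.Prime)).pos n).ne'
    have htop : ((p^n : ℕ) : ℝ≥0∞) ≠ ⊤ := ENNReal.natCast_ne_top _
    have : ((p^n : ℕ) : ℝ≥0∞)⁻¹ * (((p^n : ℕ) : ℝ≥0∞) * μ (s ∩ ball n a)) =
        ((p^n : ℕ) : ℝ≥0∞)⁻¹ * m := by rw [← hsum]
    rw [← mul_assoc, ENNReal.inv_mul_cancel h0 htop, one_mul] at this
    rw [this, mul_comm]
  have hext : μ.restrict s = m • μ := by
    haveI : IsFiniteMeasure (μ.restrict s) := by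
      refine ⟨?_⟩
      rw [Measure.restrict_apply_univ]
      exact lt_of_le_of_lt (measure_mono (Set.subset_univ _)) (by rw [haar_univ]; exact ENNReal.one_lt_top)
    refine ext_of_generate_finite _ generateFrom_ballFamily isPiSystem_ballFamily ?_ ?_
    · rintro t ⟨n, a, rfl⟩
      rw [Measure.restrict_apply measurableSet_ball, Set.inter_comm, hval n a,
        Measure.smul_apply, measure_ball, smul_eq_mul]
    · rw [Measure.restrict_apply_univ]
      simp [haar_univ, hm]
  have hm2 : m = m * m := by
    have h1 : (μ.restrict s) s = m := by
      rw [Measure.restrict_apply hs, Set.inter_self]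
    have h2 : (m • μ) s = m * m := by
      rw [Measure.smul_apply, smul_eq_mul, ← hm]
    calc m = (μ.restrict s) s := h1.symm
      _ = (m • μ) s := by rw [hext]
      _ = m * m := h2
  have hm_le : m ≤ 1 := by
    rw [hm, ← haar_univ (p := p)]
    exact measure_mono (Set.subset_univ _)
  rcases eq_or_ne m 0 with h0 | h0
  · left
    rwa [← ae_eq_empty] at h0
  · right
    have hmtop : m ≠ ⊤ := (lt_of_le_of_lt hm_le ENNReal.one_lt_top).ne
    have : m * 1 = m * m := by rw [mul_one, ← hm2]
    have h1 : (1 : ℝ≥0∞) = m := (ENNReal.mul_right_inj h0 hmtop).1 this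
    rw [ae_eq_univ]
    have hcompl : μ sᶜ = 0 := by
      have := measure_compl hs (by rw [← hm]; exact hmtop)
      rw [haar_univ, ← hm, ← h1, tsub_self] at this
      exact this
    exact hcompl

end Final

end VDPAux

open VDP MeasureTheory in
theorem stmt11 (p : ℕ) [Fact p.Prime] (g : ℤ_[p] → ℤ_[p]) (hg : IsLip p g)
    (d : ℤ_[p]) (hd : ¬ (p : ℤ_[p]) ∣ d) :
    Ergodic (fun x => d + x + (p : ℤ_[p]) * (g (x + 1) - g x)) (haarZp p) :=
  VDPAux.F_ergodic hg hd
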